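/- Under the heterogeneous elasticity model with the stated integrability, for every real φ ≠ 0 and every x > 0, the map t ↦ log E[exp(φ·a + φ·ε·t)] is differentiable at t = log x and the power-mean elasticity satisfies ε_φ(x) = E[Y(x)^φ · ε] / E[Y(x)^φ]. Moreover the geometric-mean elasticity is constant: ε_0(x) = E[ε] for all x > 0, and for φ = 1 one has ε_1(x) = E[Y(x)·ε]/E[Y(x)]. -/

import Mathlib

open MeasureTheory Real

/-- In the heterogeneous elasticity model `Y(x)(ω) = exp (a ω + ε ω * log x)`,
for `φ ≠ 0` and `x > 0` the map `t ↦ log E[exp (φ a + φ ε t)]` is differentiable at `t = log x`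
with derivative `φ · E[Y(x)^φ ε] / E[Y(x)^φ]` (so the power-mean elasticity
`ε_φ(x) = (1/φ) · d/d(log x) log E[Y(x)^φ]` equals `E[Y(x)^φ ε]/E[Y(x)^φ]`);
the geometric-mean elasticity is constant equal to `E[ε]`; and for `φ = 1` the map
`t ↦ log E[exp (a + ε t)]` has derivative `E[Y(x) ε]/E[Y(x)]` at `t = log x`. -/
lemma int_exp_of {Ω : Type*} [MeasurableSpace Ω] {μ : Measure Ω} {f g : Ω → ℝ}
    (hf : Measurable f) (hg : Measurable g) {t : ℝ}
    (hI : Integrable (fun ω => (1 + g ω ^ 2) * Real.exp (f ω + g ω * t)) μ) :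
    Integrable (fun ω => Real.exp (f ω + g ω * t)) μ := by
  refine hI.mono' ((hf.add (hg.mul_const t)).exp.aestronglyMeasurable) ?_
  filter_upwards with ω
  rw [Real.norm_eq_abs, abs_of_nonneg (Real.exp_pos _).le]
  nlinarith [Real.exp_pos (f ω + g ω * t), sq_nonneg (g ω)]

lemma aux_deriv {Ω : Type*} [MeasurableSpace Ω] (μ : Measure Ω) (f g : Ω → ℝ)
    (hf : Measurable f) (hg : Measurable g)
    (hI : ∀ t : ℝ, Integrable (fun ω => (1 + g ω ^ 2) * Real.exp (f ω + g ω * t)) μ)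
    (t₀ : ℝ) :
    HasDerivAt (fun t => ∫ ω, Real.exp (f ω + g ω * t) ∂μ)
      (∫ ω, Real.exp (f ω + g ω * t₀) * g ω ∂μ) t₀ := by
  have key := hasDerivAt_integral_of_dominated_loc_of_deriv_le (μ := μ)
    (F := fun t ω => Real.exp (f ω + g ω * t))
    (F' := fun t ω => Real.exp (f ω + g ω * t) * g ω)
    (x₀ := t₀)
    (bound := fun ω => (1 + g ω ^ 2) *
      (Real.exp (f ω + g ω * (t₀ - 1)) + Real.exp (f ω + g ω * (t₀ + 1))))
    (Metric.ball_mem_nhds t₀ one_pos)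
    (Filter.Eventually.of_forall fun t =>
      ((hf.add (hg.mul_const t)).exp.aestronglyMeasurable))
    (int_exp_of hf hg (hI t₀))
    (((hf.add (hg.mul_const t₀)).exp.mul hg).aestronglyMeasurable)
    ?_ ?_ ?_
  · exact key.2
  · filter_upwards with ω t ht
    rw [Real.norm_eq_abs, abs_mul, abs_of_nonneg (Real.exp_pos _).le]
    have hball : |t - t₀| < 1 := by simpa [Metric.mem_ball, Real.dist_eq] using ht
    have h1 : Real.exp (f ω + g ω * t) ≤
        Real.exp (f ω + g ω * (t₀ - 1)) + Real.exp (f ω + g ω * (t₀ + 1)) := by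
      rcases le_or_gt 0 (g ω) with hgω | hgω
      · have : g ω * t ≤ g ω * (t₀ + 1) := by nlinarith [abs_lt.mp hball]
        calc Real.exp (f ω + g ω * t) ≤ Real.exp (f ω + g ω * (t₀ + 1)) :=
              Real.exp_le_exp.mpr (by linarith)
          _ ≤ _ := le_add_of_nonneg_left (Real.exp_pos _).le
      · have : g ω * t ≤ g ω * (t₀ - 1) := by nlinarith [abs_lt.mp hball]
        calc Real.exp (f ω + g ω * t) ≤ Real.exp (f ω + g ω * (t₀ - 1)) :=
              Real.exp_le_exp.mpr (by linarith)
          _ ≤ _ := le_add_of_nonneg_right (Real.exp_pos _).le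
    have h2 : |g ω| ≤ 1 + g ω ^ 2 := by nlinarith [abs_nonneg (g ω), sq_abs (g ω)]
    calc Real.exp (f ω + g ω * t) * |g ω|
        ≤ (Real.exp (f ω + g ω * (t₀ - 1)) + Real.exp (f ω + g ω * (t₀ + 1))) * (1 + g ω ^ 2) :=
          mul_le_mul h1 h2 (abs_nonneg _) (by positivity)
      _ = _ := by ring
  · have := (hI (t₀ - 1)).add (hI (t₀ + 1))
    refine this.congr (Filter.Eventually.of_forall fun ω => ?_)
    simp only [Pi.add_apply]; ring
  · filter_upwards with ω t ht
    have h := (((hasDerivAt_id t).const_mul (g ω)).const_add (f ω)).exp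
    simpa [mul_comm] using h


theorem stmt0
    {Ω : Type*} [MeasurableSpace Ω] (μ : Measure Ω) [IsProbabilityMeasure μ]
    (a e : Ω → ℝ) (ha : Measurable a) (he : Measurable e)
    (hInta : Integrable a μ) (hInte : Integrable e μ)
    (φ : ℝ) (hφ : φ ≠ 0)
    (hMom : ∀ t : ℝ, Integrable (fun ω => (1 + e ω ^ 2) * Real.exp (φ * a ω + t * φ * e ω)) μ)
    (hMom1 : ∀ t : ℝ, Integrable (fun ω => (1 + e ω ^ 2) * Real.exp (1 * a ω + t * 1 * e ω)) μ)
    (x : ℝ) (hx : 0 < x) :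
    HasDerivAt (fun t : ℝ => Real.log (∫ ω, Real.exp (φ * a ω + φ * e ω * t) ∂μ))
      (φ * ((∫ ω, Real.exp (a ω + e ω * Real.log x) ^ φ * e ω ∂μ) /
            (∫ ω, Real.exp (a ω + e ω * Real.log x) ^ φ ∂μ))) (Real.log x)
    ∧ (∀ x' : ℝ, 0 < x' →
        deriv (fun t : ℝ => Real.log (Real.exp (∫ ω, (a ω + e ω * t) ∂μ))) (Real.log x')
          = ∫ ω, e ω ∂μ)
    ∧ HasDerivAt (fun t : ℝ => Real.log (∫ ω, Real.exp (a ω + e ω * t) ∂μ))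
      ((∫ ω, Real.exp (a ω + e ω * Real.log x) * e ω ∂μ) /
       (∫ ω, Real.exp (a ω + e ω * Real.log x) ∂μ)) (Real.log x) := by
  set L := Real.log x with hL
  -- Part 1
  have hI1 : ∀ t : ℝ,
      Integrable (fun ω => (1 + (φ * e ω) ^ 2) * Real.exp (φ * a ω + (φ * e ω) * t)) μ := by
    intro t
    refine ((hMom t).const_mul (1 + φ ^ 2)).mono'
      ((((measurable_const.add (((he.const_mul φ)).pow_const 2)).mul
        ((ha.const_mul φ).add ((he.const_mul φ).mul_const t)).exp)).aestronglyMeasurable) ?_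
    filter_upwards with ω
    rw [Real.norm_eq_abs, abs_of_nonneg (by positivity)]
    have hE : Real.exp (φ * a ω + φ * e ω * t) = Real.exp (φ * a ω + t * φ * e ω) := by
      congr 1; ring
    rw [hE]
    nlinarith [Real.exp_pos (φ * a ω + t * φ * e ω), sq_nonneg (e ω), sq_nonneg φ,
      sq_nonneg (φ * e ω)]
  have hd1 := aux_deriv μ (fun ω => φ * a ω) (fun ω => φ * e ω)
    (ha.const_mul φ) (he.const_mul φ) hI1 L
  have hposD : 0 < ∫ ω, Real.exp (φ * a ω + φ * e ω * L) ∂μ :=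
    integral_exp_pos (int_exp_of (ha.const_mul φ) (he.const_mul φ) (hI1 L))
  have h1 := hd1.log hposD.ne'
  have hpow : ∀ ω, Real.exp (a ω + e ω * L) ^ φ = Real.exp (φ * a ω + φ * e ω * L) := by
    intro ω
    rw [← Real.exp_mul]
    congr 1; ring
  have hDen : (∫ ω, Real.exp (a ω + e ω * L) ^ φ ∂μ)
      = ∫ ω, Real.exp (φ * a ω + φ * e ω * L) ∂μ :=
    integral_congr_ae (Filter.Eventually.of_forall fun ω => hpow ω)
  have hNum : (∫ ω, Real.exp (φ * a ω + φ * e ω * L) * (φ * e ω) ∂μ)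
      = φ * ∫ ω, Real.exp (a ω + e ω * L) ^ φ * e ω ∂μ := by
    rw [← integral_const_mul]
    exact integral_congr_ae (Filter.Eventually.of_forall fun ω =>
      show Real.exp (φ * a ω + φ * e ω * L) * (φ * e ω)
        = φ * (Real.exp (a ω + e ω * L) ^ φ * e ω) from by rw [hpow]; ring)
  have heq1 : (∫ ω, Real.exp (φ * a ω + φ * e ω * L) * (φ * e ω) ∂μ) /
      (∫ ω, Real.exp (φ * a ω + φ * e ω * L) ∂μ)
      = φ * ((∫ ω, Real.exp (a ω + e ω * L) ^ φ * e ω ∂μ) /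
            (∫ ω, Real.exp (a ω + e ω * L) ^ φ ∂μ)) := by
    rw [hNum, hDen, mul_div_assoc]
  refine ⟨heq1 ▸ h1, ?_, ?_⟩
  -- Part 2
  · intro x' hx'
    have heq : (fun t : ℝ => Real.log (Real.exp (∫ ω, (a ω + e ω * t) ∂μ)))
        = fun t => (∫ ω, a ω ∂μ) + (∫ ω, e ω ∂μ) * t := by
      funext t
      rw [Real.log_exp, integral_add hInta (hInte.mul_const t), integral_mul_const]
    rw [heq]
    exact (((hasDerivAt_id (Real.log x')).const_mul (∫ ω, e ω ∂μ)).const_add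
      (∫ ω, a ω ∂μ)).deriv.trans (mul_one _)
  -- Part 3
  · have hI3 : ∀ t : ℝ, Integrable (fun ω => (1 + e ω ^ 2) * Real.exp (a ω + e ω * t)) μ := by
      intro t
      refine (hMom1 t).congr (Filter.Eventually.of_forall fun ω => ?_)
      congr 1
      · ring
    have hd3 := aux_deriv μ a e ha he hI3 L
    have hposD3 : 0 < ∫ ω, Real.exp (a ω + e ω * L) ∂μ :=
      integral_exp_pos (int_exp_of ha he (hI3 L))
    exact hd3.log hposD3.ne'
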